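/- Let n ∈ ℕ, μ ∈ ℝⁿ, L an n×n real matrix, and let γ be the pushforward of the n-fold product of the standard real Gaussian measure (gaussianReal 0 1) under the affine map z ↦ μ + L·z, with covariance Σ = L Lᵀ. For a symmetric n×n matrix M write q_M(x) = (x − μ)ᵀ M (x − μ). Then for all symmetric n×n matrices A and B, the covariance ∫ q_A(x) q_B(x) dγ(x) − (∫ q_A(x) dγ(x))·(∫ q_B(x) dγ(x)) equals 2·tr(A Σ B Σ). -/

import Mathlib

open MeasureTheory ProbabilityTheory Real

lemma gauss_withDensity :
    gaussianReal 0 1 = volume.withDensity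
      (fun x => ((gaussianPDFReal 0 1 x).toNNReal : ENNReal)) := by
  rw [gaussianReal_of_var_ne_zero _ one_ne_zero]; rfl

lemma gauss_integral_eq (g : ℝ → ℝ) :
    ∫ x, g x ∂(gaussianReal 0 1) = ∫ x, gaussianPDFReal 0 1 x * g x := by
  rw [gauss_withDensity, integral_withDensity_eq_integral_smul
    (measurable_gaussianPDFReal 0 1).real_toNNReal g]
  congr 1
  ext x
  simp [NNReal.smul_def, Real.coe_toNNReal _ (gaussianPDFReal_nonneg 0 1 x)]

lemma gaussianPDFReal_zero_one (x : ℝ) :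
    gaussianPDFReal 0 1 x = (Real.sqrt (2 * π))⁻¹ * Real.exp (-(1/2) * x ^ 2) := by
  simp only [gaussianPDFReal, NNReal.coe_one, mul_one, sub_zero]
  ring_nf

lemma integral_pow_mul_gauss_even (k : ℕ) (hk : Even k) :
    ∫ x : ℝ, x ^ k * exp (-(1/2) * x^2)
      = 2 * ((1/2:ℝ) ^ (-((k:ℝ)+1)/2) * (1/2) * Gamma (((k:ℝ)+1)/2)) := by
  have h1 : (fun x : ℝ => x ^ k * exp (-(1/2) * x^2))
      = fun x : ℝ => |x| ^ k * exp (-(1/2) * |x|^2) := by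
    funext x
    rw [hk.pow_abs, sq_abs]
  rw [h1, integral_comp_abs (f := fun t : ℝ => t ^ k * exp (-(1/2) * t^2))]
  congr 1
  rw [show ((1/2:ℝ) ^ (-((k:ℝ)+1)/2) * (1/2) * Gamma (((k:ℝ)+1)/2))
      = (1/2:ℝ) ^ (-((k:ℝ)+1)/2) * (1/(2:ℝ)) * Gamma (((k:ℝ)+1)/2) by norm_num]
  rw [← integral_rpow_mul_exp_neg_mul_rpow (p := 2) (q := (k:ℝ)) (b := 1/2)
      two_pos (by linarith [Nat.cast_nonneg (α:=ℝ) k]) (by norm_num)]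
  refine setIntegral_congr_fun measurableSet_Ioi (fun x hx => ?_)
  rw [Real.rpow_natCast]
  norm_num [Real.rpow_two]

lemma gauss_pow_eq (k : ℕ) :
    ∫ x, x ^ k ∂(gaussianReal 0 1)
      = (Real.sqrt (2 * π))⁻¹ * ∫ x : ℝ, x ^ k * exp (-(1/2) * x^2) := by
  rw [gauss_integral_eq, ← integral_const_mul]
  congr 1
  funext x
  rw [gaussianPDFReal_zero_one]
  ring

lemma sqrt_two_pi : Real.sqrt (2 * π) = Real.sqrt 2 * Real.sqrt π :=
  Real.sqrt_mul (by norm_num) _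

lemma rpow_half_two : (2:ℝ) ^ ((1:ℝ)/2) = Real.sqrt 2 := (Real.sqrt_eq_rpow 2).symm

lemma gamma_three_half : Gamma ((3:ℝ)/2) = Real.sqrt π / 2 := by
  rw [show (3:ℝ)/2 = 1/2 + 1 by norm_num, Real.Gamma_add_one (by norm_num),
    Real.Gamma_one_half_eq]
  ring

lemma gamma_five_half : Gamma ((5:ℝ)/2) = 3 * Real.sqrt π / 4 := by
  rw [show (5:ℝ)/2 = 3/2 + 1 by norm_num, Real.Gamma_add_one (by norm_num),
    gamma_three_half]
  ring

lemma half_rpow (y : ℝ) : ((1:ℝ)/2) ^ (-y) = (2:ℝ) ^ y := by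
  rw [one_div, Real.inv_rpow (by norm_num : (0:ℝ) ≤ 2),
    ← Real.rpow_neg (by norm_num : (0:ℝ) ≤ 2), neg_neg]

lemma gmom_two : ∫ x, x ^ 2 ∂(gaussianReal 0 1) = 1 := by
  rw [gauss_pow_eq, integral_pow_mul_gauss_even 2 (by decide)]
  have h1 : (((2:ℕ):ℝ) + 1) = 3 := by norm_num
  rw [h1, show ((1:ℝ)/2) ^ (-(3:ℝ)/2) = (2:ℝ) ^ ((3:ℝ)/2) by
      rw [← half_rpow]; norm_num,
    show ((3:ℝ)/2) = 1 + 1/2 by norm_num, Real.rpow_add two_pos, Real.rpow_one,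
    rpow_half_two, show (1:ℝ) + 1/2 = 3/2 by norm_num, gamma_three_half, sqrt_two_pi]
  have h2 : Real.sqrt 2 > 0 := by positivity
  have h3 : Real.sqrt π > 0 := Real.sqrt_pos.mpr pi_pos
  field_simp

lemma gmom_four : ∫ x, x ^ 4 ∂(gaussianReal 0 1) = 3 := by
  rw [gauss_pow_eq, integral_pow_mul_gauss_even 4 (by decide)]
  have h1 : (((4:ℕ):ℝ) + 1) = 5 := by norm_num
  rw [h1, show ((1:ℝ)/2) ^ (-(5:ℝ)/2) = (2:ℝ) ^ ((5:ℝ)/2) by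
      rw [← half_rpow]; norm_num,
    show ((5:ℝ)/2) = 2 + 1/2 by norm_num, Real.rpow_add two_pos,
    rpow_half_two, show (2:ℝ) ^ (2:ℝ) = 4 by
      rw [show (2:ℝ) = ((2:ℕ):ℝ) by norm_num, Real.rpow_natCast]; norm_num,
    show (2:ℝ) + 1/2 = 5/2 by norm_num, gamma_five_half, sqrt_two_pi]
  have h2 : Real.sqrt 2 > 0 := by positivity
  have h3 : Real.sqrt π > 0 := Real.sqrt_pos.mpr pi_pos
  field_simp

lemma gauss_map_neg :
    Measure.map (fun x : ℝ => -x) (gaussianReal 0 1) = gaussianReal 0 1 := by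
  have h := gaussianReal_map_const_mul (μ := 0) (v := 1) (-1)
  simp only [neg_one_mul, mul_zero] at h
  convert h using 2 <;> simp

lemma gmom_odd (k : ℕ) (hk : Odd k) : ∫ x, x ^ k ∂(gaussianReal 0 1) = 0 := by
  have h : ∫ x, x ^ k ∂(gaussianReal 0 1)
      = ∫ x, (-x) ^ k ∂(gaussianReal 0 1) := by
    conv_lhs => rw [← gauss_map_neg]
    rw [integral_map measurable_neg.aemeasurable]
    exact (measurable_id.pow_const k).aestronglyMeasurable
  simp_rw [hk.neg_pow] at h
  simp only [integral_neg] at h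
  linarith

lemma gmom_zero : ∫ x, x ^ 0 ∂(gaussianReal 0 1) = 1 := by simp

lemma pi_integral_prod {α : Type*} [MeasurableSpace α] (μ : Measure α) [SigmaFinite μ]
    {n : ℕ} (f : Fin n → α → ℝ) :
    ∫ z : Fin n → α, ∏ i, f i (z i) ∂(Measure.pi fun _ => μ) = ∏ i, ∫ x, f i x ∂μ := by
  letI : MeasureSpace α := ⟨μ⟩
  letI : SigmaFinite (volume : Measure α) := ‹SigmaFinite μ›
  exact MeasureTheory.integral_fintype_prod_eq_prod f

lemma pi_integrable_prod {α : Type*} [MeasurableSpace α] (μ : Measure α) [SigmaFinite μ]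
    {n : ℕ} (f : Fin n → α → ℝ) (hf : ∀ i, Integrable (f i) μ) :
    Integrable (fun z : Fin n → α => ∏ i, f i (z i)) (Measure.pi fun _ => μ) := by
  letI : MeasureSpace α := ⟨μ⟩
  letI : SigmaFinite (volume : Measure α) := ‹SigmaFinite μ›
  exact MeasureTheory.Integrable.fintype_prod (f := f) hf

lemma integrable_pow_gauss (k : ℕ) :
    Integrable (fun x : ℝ => x ^ k) (gaussianReal 0 1) := by
  rw [gauss_withDensity, integrable_withDensity_iff
    (measurable_gaussianPDFReal 0 1).real_toNNReal.coe_nnreal_ennreal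
    (ae_of_all _ fun x => ENNReal.coe_lt_top)]
  have h : (fun x : ℝ => x ^ k * (((gaussianPDFReal 0 1 x).toNNReal : ENNReal)).toReal)
      = fun x : ℝ => (Real.sqrt (2 * π))⁻¹ * (x ^ k * exp (-(1/2) * x ^ 2)) := by
    funext x
    rw [ENNReal.coe_toReal, Real.coe_toNNReal _ (gaussianPDFReal_nonneg 0 1 x),
      gaussianPDFReal_zero_one]
    ring
  rw [h]
  have := integrable_rpow_mul_exp_neg_mul_sq (b := 1/2) (by norm_num)
    (s := (k:ℝ)) (by linarith [Nat.cast_nonneg (α:=ℝ) k])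
  simp_rw [Real.rpow_natCast] at this
  exact this.const_mul _

lemma g0 : ∫ x, x ^ 0 ∂(gaussianReal 0 1) = 1 := by simp
lemma g1 : ∫ x, x ^ 1 ∂(gaussianReal 0 1) = 0 := gmom_odd 1 odd_one
lemma g2 : ∫ x, x ^ 2 ∂(gaussianReal 0 1) = 1 := gmom_two
lemma g3 : ∫ x, x ^ 3 ∂(gaussianReal 0 1) = 0 := gmom_odd 3 (by decide)
lemma g4 : ∫ x, x ^ 4 ∂(gaussianReal 0 1) = 3 := gmom_four

variable {n : ℕ}

lemma single_eq_prod (z : Fin n → ℝ) (i : Fin n) :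
    z i = ∏ m, z m ^ (if i = m then 1 else 0) := by
  simp [pow_ite, Finset.prod_ite_eq]

lemma monomial2 (i j : Fin n) :
    (fun z : Fin n → ℝ => z i * z j)
      = fun z => ∏ m, (z m) ^ ((if i = m then 1 else 0) + (if j = m then 1 else 0)) := by
  funext z
  conv_lhs => rw [single_eq_prod z i, single_eq_prod z j]
  rw [← Finset.prod_mul_distrib]
  exact Finset.prod_congr rfl fun m _ => (pow_add _ _ _).symm

lemma monomial4 (i j k l : Fin n) :
    (fun z : Fin n → ℝ => z i * z j * z k * z l)
      = fun z => ∏ m, (z m) ^ ((if i = m then 1 else 0) + (if j = m then 1 else 0)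
          + (if k = m then 1 else 0) + (if l = m then 1 else 0)) := by
  funext z
  conv_lhs => rw [single_eq_prod z i, single_eq_prod z j, single_eq_prod z k,
    single_eq_prod z l]
  rw [← Finset.prod_mul_distrib, ← Finset.prod_mul_distrib, ← Finset.prod_mul_distrib]
  refine Finset.prod_congr rfl fun m _ => ?_
  rw [← pow_add, ← pow_add, ← pow_add]

lemma pig_monomial (e : Fin n → ℕ) :
    ∫ z : Fin n → ℝ, ∏ m, (z m) ^ (e m) ∂(Measure.pi fun _ : Fin n => gaussianReal 0 1)
      = ∏ m, ∫ x, x ^ (e m) ∂(gaussianReal 0 1) :=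
  pi_integral_prod _ (fun m => fun t => t ^ (e m))

lemma integrable2 (i j : Fin n) :
    Integrable (fun z : Fin n → ℝ => z i * z j)
      (Measure.pi fun _ : Fin n => gaussianReal 0 1) := by
  rw [monomial2]
  exact pi_integrable_prod _ _ (fun m => integrable_pow_gauss _)

lemma integrable4 (i j k l : Fin n) :
    Integrable (fun z : Fin n → ℝ => z i * z j * z k * z l)
      (Measure.pi fun _ : Fin n => gaussianReal 0 1) := by
  rw [monomial4]
  exact pi_integrable_prod _ _ (fun m => integrable_pow_gauss _)

lemma int2 (i j : Fin n) :
    ∫ z, z i * z j ∂(Measure.pi fun _ : Fin n => gaussianReal 0 1)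
      = if i = j then (1:ℝ) else 0 := by
  rw [monomial2, pig_monomial (fun m => (if i = m then 1 else 0) + (if j = m then 1 else 0))]
  rcases eq_or_ne i j with h | h
  · subst h
    have h1 : ∀ m : Fin n,
        (∫ x, x ^ ((if i = m then 1 else 0) + (if i = m then 1 else 0))
          ∂(gaussianReal 0 1)) = if i = m then 1 else 1 := by
      intro m; by_cases h : i = m <;> simp [h, g2, g0]
    simp [h1]
  · rw [if_neg h]
    refine Finset.prod_eq_zero (Finset.mem_univ i) ?_
    rw [if_pos rfl, if_neg (Ne.symm h)]
    exact g1

lemma int4 (i j k l : Fin n) :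
    ∫ z, z i * z j * z k * z l ∂(Measure.pi fun _ : Fin n => gaussianReal 0 1)
      = (if i = j then (1:ℝ) else 0) * (if k = l then (1:ℝ) else 0)
        + (if i = k then (1:ℝ) else 0) * (if j = l then (1:ℝ) else 0)
        + (if i = l then (1:ℝ) else 0) * (if j = k then (1:ℝ) else 0) := by
  rw [monomial4, pig_monomial (fun m => (if i = m then 1 else 0) + (if j = m then 1 else 0)
    + (if k = m then 1 else 0) + (if l = m then 1 else 0))]
  by_cases hij : i = j
  · subst hij
    by_cases hik : i = k
    · subst hik
      by_cases hil : i = l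
      · subst hil
        have h1 : ∀ m, (∫ x, x ^ ((if i = m then 1 else 0) + (if i = m then 1 else 0)
            + (if i = m then 1 else 0) + (if i = m then 1 else 0)) ∂(gaussianReal 0 1))
            = if i = m then (3:ℝ) else 1 := by
          intro m; by_cases h : i = m <;> simp [h, g4, g0]
        rw [Finset.prod_congr rfl fun m _ => h1 m, Finset.prod_ite_eq]
        norm_num
      · rw [Finset.prod_eq_zero (Finset.mem_univ i)
          (by simpa [(show ¬ l = i from fun h => hil h.symm)] using g3)]
        simp [hil]
    · by_cases hil : i = l
      · subst hil
        rw [Finset.prod_eq_zero (Finset.mem_univ i)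
          (by simpa [(show ¬ k = i from fun h => hik h.symm)] using g3)]
        simp [hik, (show ¬ k = i from fun h => hik h.symm)]
      · by_cases hkl : k = l
        · subst hkl
          have h1 : ∀ m, (∫ x, x ^ ((if i = m then 1 else 0) + (if i = m then 1 else 0)
              + (if k = m then 1 else 0) + (if k = m then 1 else 0)) ∂(gaussianReal 0 1))
              = 1 := by
            intro m
            by_cases h1 : i = m
            · have h2 : ¬ k = m := fun h => hik (h1.trans h.symm)
              simp [h1, h2, g2]
            · by_cases h2 : k = m <;> simp [h1, h2, g2, g0]
          rw [Finset.prod_congr rfl fun m _ => h1 m, Finset.prod_const_one]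
          simp [hik, hil]
        · rw [Finset.prod_eq_zero (Finset.mem_univ k)
            (by simpa [(show ¬ i = k from hik), (show ¬ l = k from fun h => hkl h.symm)]
              using g1)]
          simp [hik, hil, hkl]
  · by_cases hik : i = k
    · subst hik
      by_cases hjl : j = l
      · subst hjl
        have h1 : ∀ m, (∫ x, x ^ ((if i = m then 1 else 0) + (if j = m then 1 else 0)
            + (if i = m then 1 else 0) + (if j = m then 1 else 0)) ∂(gaussianReal 0 1))
            = 1 := by
          intro m
          by_cases h1 : i = m
          · have h2 : ¬ j = m := fun h => hij (h1.trans h.symm)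
            simp [h1, h2, g2]
          · by_cases h2 : j = m <;> simp [h1, h2, g2, g0]
        rw [Finset.prod_congr rfl fun m _ => h1 m, Finset.prod_const_one]
        simp [hij]
      · rw [Finset.prod_eq_zero (Finset.mem_univ j)
          (by simpa [(show ¬ i = j from hij), (show ¬ l = j from fun h => hjl h.symm)]
            using g1)]
        simp [hij, hjl, (show ¬ j = i from fun h => hij h.symm)]
    · by_cases hil : i = l
      · subst hil
        by_cases hjk : j = k
        · subst hjk
          have h1 : ∀ m, (∫ x, x ^ ((if i = m then 1 else 0) + (if j = m then 1 else 0)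
              + (if j = m then 1 else 0) + (if i = m then 1 else 0)) ∂(gaussianReal 0 1))
              = 1 := by
            intro m
            by_cases h1 : i = m
            · have h2 : ¬ j = m := fun h => hij (h1.trans h.symm)
              simp [h1, h2, g2]
            · by_cases h2 : j = m <;> simp [h1, h2, g2, g0]
          rw [Finset.prod_congr rfl fun m _ => h1 m, Finset.prod_const_one]
          simp [hij, hik]
        · rw [Finset.prod_eq_zero (Finset.mem_univ j)
            (by simpa [(show ¬ i = j from hij), (show ¬ k = j from fun h => hjk h.symm)]
              using g1)]
          simp [hij, hik, hjk]
      · rw [Finset.prod_eq_zero (Finset.mem_univ i)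
          (by simpa [(show ¬ j = i from fun h => hij h.symm),
            (show ¬ k = i from fun h => hik h.symm),
            (show ¬ l = i from fun h => hil h.symm)] using g1)]
        simp [hij, hik, hil]


lemma sum_eval (S T : Matrix (Fin n) (Fin n) ℝ) :
    ∑ i, ∑ j, ∑ k, ∑ l, (S i j * T k l) *
        ((if i = j then (1:ℝ) else 0) * (if k = l then (1:ℝ) else 0)
          + (if i = k then (1:ℝ) else 0) * (if j = l then (1:ℝ) else 0)
          + (if i = l then (1:ℝ) else 0) * (if j = k then (1:ℝ) else 0))
      = S.trace * T.trace + ∑ i, ∑ j, S i j * T i j + (S * T).trace := by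
  simp only [mul_add, Finset.sum_add_distrib, mul_ite, ite_mul, mul_zero, zero_mul, mul_one,
    one_mul, Finset.sum_ite_irrel, Finset.sum_const_zero, Finset.sum_ite_eq, Finset.sum_ite_eq', Finset.mem_univ, if_true,
    Matrix.trace, Matrix.diag, Matrix.mul_apply, Finset.mul_sum, Finset.sum_mul]
  rw [Finset.sum_comm]

open Matrix in
/-- For the Gaussian measure `γ` on `ℝⁿ` with mean `μ` and covariance `Σ = L Lᵀ`
(the pushforward of the product of standard Gaussians under `z ↦ μ + L z`), and quadratic
forms `q_M(x) = (x − μ)ᵀ M (x − μ)`, the covariance of `q_A` and `q_B` for symmetric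
matrices `A, B` equals `2·tr(A Σ B Σ)`. -/
theorem gaussian_covariance_quadratic_forms
    {n : ℕ} (μ : Fin n → ℝ) (L : Matrix (Fin n) (Fin n) ℝ)
    (γ : Measure (Fin n → ℝ))
    (hγ : γ = Measure.map (fun z : Fin n → ℝ => μ + L.mulVec z)
      (Measure.pi fun _ : Fin n => gaussianReal 0 1))
    (A B : Matrix (Fin n) (Fin n) ℝ) (hA : A.IsSymm) (hB : B.IsSymm)
    (qA qB : (Fin n → ℝ) → ℝ)
    (hqA : qA = fun x => (x - μ) ⬝ᵥ A.mulVec (x - μ))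
    (hqB : qB = fun x => (x - μ) ⬝ᵥ B.mulVec (x - μ)) :
    ∫ x, qA x * qB x ∂γ - (∫ x, qA x ∂γ) * (∫ x, qB x ∂γ) =
      2 * (A * (L * Lᵀ) * B * (L * Lᵀ)).trace := by
  subst hγ hqA hqB
  set ν : Measure (Fin n → ℝ) := Measure.pi fun _ : Fin n => gaussianReal 0 1 with hν
  set S : Matrix (Fin n) (Fin n) ℝ := Lᵀ * A * L with hS
  set T : Matrix (Fin n) (Fin n) ℝ := Lᵀ * B * L with hT
  -- measurability of the affine map
  have hLm : Measurable (fun z : Fin n → ℝ => μ + L.mulVec z) := by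
    refine measurable_const.add ?_
    apply measurable_pi_lambda
    intro i
    show Measurable fun z : Fin n → ℝ => ∑ j, L i j * z j
    exact Finset.measurable_sum _ fun j _ => (measurable_pi_apply j).const_mul _
  -- measurability of the quadratic forms
  have hqm : ∀ M : Matrix (Fin n) (Fin n) ℝ,
      Measurable (fun x : Fin n → ℝ => (x - μ) ⬝ᵥ M.mulVec (x - μ)) := by
    intro M
    show Measurable fun x : Fin n → ℝ => ∑ i, (x i - μ i) * ∑ j, M i j * (x j - μ j)
    exact Finset.measurable_sum _ fun i _ =>
      (((measurable_pi_apply i).sub measurable_const).mul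
        (Finset.measurable_sum _ fun j _ =>
          ((measurable_pi_apply j).sub measurable_const).const_mul _))
  -- pointwise identity
  have key : ∀ (M : Matrix (Fin n) (Fin n) ℝ) (z : Fin n → ℝ),
      ((μ + L.mulVec z) - μ) ⬝ᵥ M.mulVec ((μ + L.mulVec z) - μ)
        = ∑ i, ∑ j, (Lᵀ * M * L) i j * (z i * z j) := by
    intro M z
    rw [add_sub_cancel_left, Matrix.mulVec_mulVec, ← Matrix.vecMul_transpose,
      ← Matrix.dotProduct_mulVec, Matrix.mulVec_mulVec, ← Matrix.mul_assoc]
    show ∑ i, z i * ∑ j, (Lᵀ * M * L) i j * z j = _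
    rw [Finset.sum_congr rfl fun i _ => Finset.mul_sum _ _ _]
    exact Finset.sum_congr rfl fun i _ => Finset.sum_congr rfl fun j _ => by ring
  -- first moments
  have hsingle : ∀ M : Matrix (Fin n) (Fin n) ℝ,
      ∫ x, (x - μ) ⬝ᵥ M.mulVec (x - μ)
          ∂(Measure.map (fun z : Fin n → ℝ => μ + L.mulVec z) ν)
        = (Lᵀ * M * L).trace := by
    intro M
    rw [integral_map hLm.aemeasurable (hqm M).aestronglyMeasurable]
    simp_rw [key M]
    rw [hν]
    rw [integral_finset_sum _ (fun i _ =>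
      integrable_finset_sum _ fun j _ => (integrable2 i j).const_mul ((Lᵀ * M * L) i j))]
    rw [Finset.sum_congr rfl fun i _ =>
      integral_finset_sum _ fun j _ => (integrable2 i j).const_mul ((Lᵀ * M * L) i j)]
    simp_rw [integral_const_mul, int2]
    simp [Matrix.trace, Matrix.diag, mul_ite, mul_one, mul_zero, Finset.sum_ite_eq]
  -- second moment
  have hprod :
      ∫ x, ((x - μ) ⬝ᵥ A.mulVec (x - μ)) * ((x - μ) ⬝ᵥ B.mulVec (x - μ))
          ∂(Measure.map (fun z : Fin n → ℝ => μ + L.mulVec z) ν)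
        = S.trace * T.trace + (∑ i, ∑ j, S i j * T i j) + (S * T).trace := by
    rw [integral_map hLm.aemeasurable (show AEStronglyMeasurable (fun x : Fin n → ℝ =>
      ((x - μ) ⬝ᵥ A.mulVec (x - μ)) * ((x - μ) ⬝ᵥ B.mulVec (x - μ))) _ from
      ((hqm A).mul (hqm B)).aestronglyMeasurable)]
    simp_rw [key A, key B]
    have hexp : ∀ z : Fin n → ℝ,
        (∑ i, ∑ j, S i j * (z i * z j)) * (∑ k, ∑ l, T k l * (z k * z l))
          = ∑ i, ∑ j, ∑ k, ∑ l, (S i j * T k l) * (z i * z j * z k * z l) := by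
      intro z
      rw [Finset.sum_mul]
      refine Finset.sum_congr rfl fun i _ => ?_
      rw [Finset.sum_mul]
      refine Finset.sum_congr rfl fun j _ => ?_
      rw [Finset.mul_sum]
      refine Finset.sum_congr rfl fun k _ => ?_
      rw [Finset.mul_sum]
      exact Finset.sum_congr rfl fun l _ => by ring
    rw [← hS, ← hT]
    simp_rw [hexp]
    have int_atom : ∀ i j k l : Fin n,
        Integrable (fun z : Fin n → ℝ => (S i j * T k l) * (z i * z j * z k * z l)) ν :=
      fun i j k l => (integrable4 i j k l).const_mul _
    rw [integral_finset_sum _ (fun i _ => integrable_finset_sum _ fun j _ =>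
      integrable_finset_sum _ fun k _ => integrable_finset_sum _ fun l _ => int_atom i j k l)]
    rw [Finset.sum_congr rfl fun i _ => integral_finset_sum _ fun j _ =>
      integrable_finset_sum _ fun k _ => integrable_finset_sum _ fun l _ => int_atom i j k l]
    rw [Finset.sum_congr rfl fun i _ => Finset.sum_congr rfl fun j _ =>
      integral_finset_sum _ fun k _ => integrable_finset_sum _ fun l _ => int_atom i j k l]
    rw [Finset.sum_congr rfl fun i _ => Finset.sum_congr rfl fun j _ =>
      Finset.sum_congr rfl fun k _ => integral_finset_sum _ fun l _ => int_atom i j k l]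
    simp_rw [integral_const_mul, hν, int4]
    exact sum_eval S T
  rw [hsingle A, hsingle B, hprod]
  -- symmetry of T
  have hTsym : T.IsSymm := by
    rw [Matrix.IsSymm, hT, Matrix.transpose_mul, Matrix.transpose_mul,
      Matrix.transpose_transpose, hB.eq, Matrix.mul_assoc]
  have hsum : (∑ i, ∑ j, S i j * T i j) = (S * T).trace := by
    rw [Matrix.trace]
    simp only [Matrix.diag, Matrix.mul_apply]
    exact Finset.sum_congr rfl fun i _ => Finset.sum_congr rfl fun j _ => by
      rw [hTsym.apply i j]
  rw [hsum]
  -- trace identity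
  have htr : (S * T).trace = (A * (L * Lᵀ) * B * (L * Lᵀ)).trace := by
    have h1 : S * T = Lᵀ * (A * (L * Lᵀ) * B * L) := by
      rw [hS, hT]; simp only [Matrix.mul_assoc]
    have h2 : (A * (L * Lᵀ) * B * L) * Lᵀ = A * (L * Lᵀ) * B * (L * Lᵀ) := by
      simp only [Matrix.mul_assoc]
    rw [h1, Matrix.trace_mul_comm, h2]
  rw [htr]
  ring
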